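/- A numerical semigroup Γ strictly generated by a sequence r₀,…,r_h (with strictly decreasing divisor sequence ending at 1) is a free numerical semigroup: every element z ∈ Γ admits a unique representation z = Σ_{j=0}^{h} a_j r_j with a₀ ∈ ℕ and 0 ≤ a_j < d_j/d_{j+1} for 1 ≤ j ≤ h. -/

import Mathlib

open Finset
lemma sgf_gcd_succ (r : ℕ → ℕ) (j : ℕ) :
    (range (j + 1)).gcd r = Nat.gcd (r j) ((range j).gcd r) := by
  rw [Finset.range_add_one, Finset.gcd_insert]; rfl
lemma sgf_dvd (r : ℕ → ℕ) {i j : ℕ} (hij : i < j) : (range j).gcd r ∣ r i :=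
  Finset.gcd_dvd (Finset.mem_range.mpr hij)
lemma sgf_gpos (r : ℕ → ℕ) (h0 : 0 < r 0) {j : ℕ} (hj : 1 ≤ j) : 0 < (range j).gcd r :=
  Nat.pos_of_dvd_of_pos (sgf_dvd r hj) h0
lemma sgf_dvd_succ (r : ℕ → ℕ) (j : ℕ) : (range (j+1)).gcd r ∣ (range j).gcd r := by
  rw [sgf_gcd_succ]; exact Nat.gcd_dvd_right _ _
lemma sgf_e2 (r : ℕ → ℕ) (h0 : 0 < r 0) {j : ℕ} (hj : 1 ≤ j)
    (hlt : (range (j+1)).gcd r < (range j).gcd r) :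
    2 ≤ (range j).gcd r / (range (j+1)).gcd r := by
  have hpos2 : 0 < (range (j+1)).gcd r := sgf_gpos r h0 (by omega)
  obtain ⟨m, hm⟩ := sgf_dvd_succ r j
  rcases m with _ | _ | m
  · simp at hm; omega
  · simp at hm; omega
  · have : (range j).gcd r / (range (j+1)).gcd r = m + 2 := by
      rw [hm, Nat.mul_div_cancel_left _ hpos2]
    omega
lemma sgf_eR (r : ℕ → ℕ) (k : ℕ) :
    ((range (k+1)).gcd r / (range (k+2)).gcd r) * r (k+1)
      = (range (k+1)).gcd r * (r (k+1) / (range (k+2)).gcd r) := by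
  have h1 : (range (k+2)).gcd r ∣ r (k+1) := by
    rw [sgf_gcd_succ]; exact Nat.gcd_dvd_left _ _
  have h2 : (range (k+2)).gcd r ∣ (range (k+1)).gcd r := sgf_dvd_succ r (k+1)
  conv_lhs => rw [← Nat.div_mul_cancel h1]
  rw [show ((range (k+1)).gcd r / (range (k+2)).gcd r) * (r (k+1) / (range (k+2)).gcd r * (range (k+2)).gcd r) = ((range (k+1)).gcd r / (range (k+2)).gcd r * (range (k+2)).gcd r) * (r (k+1) / (range (k+2)).gcd r) by ring, Nat.div_mul_cancel h2]

/-- Key lemma P: large multiples of g(k+1) are representable with bounded coefficients. -/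
lemma sgf_P (h : ℕ) (r : ℕ → ℕ) (h0 : 0 < r 0)
    (hdec : ∀ j, 1 ≤ j → j ≤ h → (range (j+1)).gcd r < (range j).gcd r) :
    ∀ k, k ≤ h → ∀ n : ℕ, (range (k+1)).gcd r ∣ n →
      (∑ i ∈ Icc 1 k, ((range i).gcd r / (range (i+1)).gcd r - 1) * r i) ≤ n →
      ∃ a : ℕ → ℕ,
        (∀ i, 1 ≤ i → i ≤ k → a i < (range i).gcd r / (range (i+1)).gcd r) ∧
        n = ∑ i ∈ range (k+1), a i * r i := by
  intro k
  induction k with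
  | zero =>
    intro _ n hn _
    have hg1 : (range 1).gcd r = r 0 := by simp [Finset.range_one]
    rw [hg1] at hn
    obtain ⟨c, hc⟩ := hn
    refine ⟨fun i => if i = 0 then c else 0, by omega, ?_⟩
    simp [Finset.range_one, hc, Nat.mul_comm]
  | succ k ih =>
    intro hk n hn hT
    set g1 := (range (k+1)).gcd r with hg1def
    set g2 := (range (k+2)).gcd r with hg2def
    set R := r (k+1) with hRdef
    set e := g1 / g2 with hedef
    have hg2R : g2 ∣ R := by rw [hg2def, sgf_gcd_succ]; exact Nat.gcd_dvd_left _ _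
    have hg2g1 : g2 ∣ g1 := sgf_dvd_succ r (k+1)
    have hg2pos : 0 < g2 := sgf_gpos r h0 (by omega)
    have he2 : 2 ≤ e := sgf_e2 r h0 (by omega) (hdec (k+1) (by omega) (by omega))
    obtain ⟨c, hc⟩ := hn
    have hbez : (g2 : ℤ) = (R : ℤ) * Nat.gcdA R g1 + (g1 : ℤ) * Nat.gcdB R g1 := by
      have h1 := Nat.gcd_eq_gcd_ab R g1
      have h2 : g2 = Nat.gcd R g1 := by rw [hg2def, sgf_gcd_succ]
      rw [h2]; exact_mod_cast h1
    set x : ℤ := (c : ℤ) * Nat.gcdA R g1 with hxdef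
    have hnx : (n : ℤ) = (R : ℤ) * x + (g1 : ℤ) * ((c:ℤ) * Nat.gcdB R g1) := by
      rw [hc]; push_cast; linear_combination (c : ℤ) * hbez
    set a : ℕ := (x % (e : ℤ)).toNat with hadef
    have hene : (e:ℤ) ≠ 0 := by exact_mod_cast (by omega : e ≠ 0)
    have hemod1 : 0 ≤ x % (e:ℤ) := Int.emod_nonneg x hene
    have hemod2 : x % (e:ℤ) < (e:ℤ) := Int.emod_lt_of_pos x (by exact_mod_cast (by omega : 0 < e))
    have hae : a < e := by omega
    have hxsplit : x = (e:ℤ) * (x / e) + x % e := (Int.mul_ediv_add_emod x e).symm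
    have heRZ : (e:ℤ) * R = (g1:ℤ) * ((R / g2 : ℕ) : ℤ) := by
      exact_mod_cast congrArg (Nat.cast : ℕ → ℤ) (sgf_eR r k)
    have ha' : (a : ℤ) = x % (e:ℤ) := Int.toNat_of_nonneg hemod1
    -- rewrite T (k+1)
    have hTsucc : (∑ i ∈ Icc 1 (k+1), ((range i).gcd r / (range (i+1)).gcd r - 1) * r i)
        = (∑ i ∈ Icc 1 k, ((range i).gcd r / (range (i+1)).gcd r - 1) * r i) + (e - 1) * R := by
      rw [Finset.sum_Icc_succ_top (by omega : 1 ≤ k + 1)]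
    set T := ∑ i ∈ Icc 1 k, ((range i).gcd r / (range (i+1)).gcd r - 1) * r i with hTdef
    have haR : a * R ≤ (e - 1) * R := Nat.mul_le_mul_right _ (by omega)
    have han : a * R ≤ n := le_trans haR (by omega)
    have hdvd1 : (g1 : ℤ) ∣ (n : ℤ) - (a:ℤ) * R := by
      refine ⟨((R / g2 : ℕ) : ℤ) * (x / e) + (c:ℤ) * Nat.gcdB R g1, ?_⟩
      rw [hnx, ha']
      linear_combination (R:ℤ) * hxsplit + (x / (e:ℤ)) * heRZ
    have hg1m : g1 ∣ (n - a * R) := by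
      have h1 : (g1:ℤ) ∣ ((n - a * R : ℕ) : ℤ) := by
        rwa [Nat.cast_sub han, Nat.cast_mul]
      exact_mod_cast h1
    have hTm : T ≤ n - a * R := by omega
    obtain ⟨a', ha'b, ha's⟩ := ih (by omega) (n - a * R) hg1m hTm
    refine ⟨fun i => if i = k + 1 then a else a' i, ?_, ?_⟩
    · intro i h1 h2
      by_cases hik : i = k + 1
      · subst hik; simpa using hae
      · simpa [hik] using ha'b i h1 (by omega)
    · rw [Finset.sum_range_succ]
      have hcong : ∑ i ∈ range (k+1), (if i = k + 1 then a else a' i) * r i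
          = ∑ i ∈ range (k+1), a' i * r i := by
        refine Finset.sum_congr rfl fun i hi => ?_
        rw [if_neg (by have := Finset.mem_range.mp hi; omega)]
      simp only [hcong, eq_self_iff_true, if_true]
      rw [← ha's, ← hRdef]
      omega

/-- The threshold sum is smaller than the next generator. -/
lemma sgf_T (h : ℕ) (r : ℕ → ℕ) (hpos : ∀ j, j ≤ h → 0 < r j)
    (hdec : ∀ j, 1 ≤ j → j ≤ h → (range (j+1)).gcd r < (range j).gcd r)
    (hstrict : ∀ j, 1 ≤ j → j + 1 ≤ h →
      ((range j).gcd r / (range (j+1)).gcd r) * r j < r (j+1)) :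
    ∀ k, k + 1 ≤ h →
      (∑ i ∈ Icc 1 k, ((range i).gcd r / (range (i+1)).gcd r - 1) * r i) < r (k+1) := by
  intro k
  induction k with
  | zero => intro hk; simpa using hpos 1 (by omega)
  | succ k ih =>
    intro hk
    have h0 : 0 < r 0 := hpos 0 (by omega)
    have he2 : 2 ≤ (range (k+1)).gcd r / (range (k+2)).gcd r :=
      sgf_e2 r h0 (by omega) (hdec (k+1) (by omega) (by omega))
    have hlt := ih (by omega)
    have hstep : ((range (k+1)).gcd r / (range (k+2)).gcd r) * r (k+1) < r (k+2) :=
      hstrict (k+1) (by omega) (by omega)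
    rw [Finset.sum_Icc_succ_top (by omega : 1 ≤ k + 1)]
    have h1 : ((range (k+1)).gcd r / (range (k+2)).gcd r) * r (k+1)
        = ((range (k+1)).gcd r / (range (k+2)).gcd r - 1) * r (k+1) + r (k+1) := by
      obtain ⟨m, hm⟩ : ∃ m, (range (k+1)).gcd r / (range (k+2)).gcd r = m + 1 :=
        ⟨(range (k+1)).gcd r / (range (k+2)).gcd r - 1, by omega⟩
      rw [hm]; simp [Nat.add_mul]
    calc (∑ i ∈ Icc 1 k, ((range i).gcd r / (range (i+1)).gcd r - 1) * r i)
          + ((range (k+1)).gcd r / (range (k+2)).gcd r - 1) * r (k+1)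
        < r (k+1) + ((range (k+1)).gcd r / (range (k+2)).gcd r - 1) * r (k+1) := by omega
      _ = ((range (k+1)).gcd r / (range (k+2)).gcd r) * r (k+1) := by rw [h1, Nat.add_comm]
      _ < r (k+2) := hstep

/-- Every representable number has a representation with bounded coefficients. -/
lemma sgf_EX (h : ℕ) (r : ℕ → ℕ) (hpos : ∀ j, j ≤ h → 0 < r j)
    (hdec : ∀ j, 1 ≤ j → j ≤ h → (range (j+1)).gcd r < (range j).gcd r)
    (hstrict : ∀ j, 1 ≤ j → j + 1 ≤ h →
      ((range j).gcd r / (range (j+1)).gcd r) * r j < r (j+1)) :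
    ∀ k, k ≤ h → ∀ a : ℕ → ℕ, ∃ b : ℕ → ℕ,
      (∀ i, 1 ≤ i → i ≤ k → b i < (range i).gcd r / (range (i+1)).gcd r) ∧
      (∑ i ∈ range (k+1), b i * r i) = ∑ i ∈ range (k+1), a i * r i := by
  intro k
  induction k with
  | zero => intro _ a; exact ⟨a, by omega, rfl⟩
  | succ k ih =>
    intro hk a
    have h0 : 0 < r 0 := hpos 0 (by omega)
    set g1 := (range (k+1)).gcd r with hg1def
    set g2 := (range (k+2)).gcd r with hg2def
    set e := g1 / g2 with hedef
    have hg2R : g2 ∣ r (k+1) := by rw [hg2def, sgf_gcd_succ]; exact Nat.gcd_dvd_left _ _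
    have he2 : 2 ≤ e := sgf_e2 r h0 (by omega) (hdec (k+1) (by omega) (by omega))
    set b1 : ℕ := a (k+1) % e with hb1def
    set t : ℕ := a (k+1) / e with htdef
    have hb1e : b1 < e := Nat.mod_lt _ (by omega)
    have hsplit : a (k+1) = e * t + b1 := (Nat.div_add_mod _ _).symm
    rcases Nat.eq_zero_or_pos t with ht0 | htpos
    · -- t = 0 : recurse
      rw [ht0, Nat.mul_zero] at hsplit
      obtain ⟨b', hb'b, hb's⟩ := ih (by omega) a
      refine ⟨fun i => if i = k + 1 then b1 else b' i, ?_, ?_⟩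
      · intro i h1 h2
        by_cases hik : i = k + 1
        · subst hik; simpa using hb1e
        · simpa [hik] using hb'b i h1 (by omega)
      · rw [Finset.sum_range_succ (fun i => (if i = k + 1 then b1 else b' i) * r i) (k+1),
            Finset.sum_range_succ (fun i => a i * r i) (k+1)]
        have hcong : ∑ i ∈ range (k+1), (if i = k + 1 then b1 else b' i) * r i
            = ∑ i ∈ range (k+1), b' i * r i := by
          refine Finset.sum_congr rfl fun i hi => ?_
          rw [if_neg (by have := Finset.mem_range.mp hi; omega)]
        simp only [hcong, eq_self_iff_true, if_true, hb's]
        have h5 : a (k+1) * r (k+1) = b1 * r (k+1) := by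
          rw [show a (k+1) = b1 by omega]
        omega
    · -- t ≥ 1 : use sgf_P on w
      set w := (∑ i ∈ range (k+1), a i * r i) + t * (e * r (k+1)) with hwdef
      have hgw : g1 ∣ w := by
        apply Nat.dvd_add
        · exact Finset.dvd_sum fun i hi =>
            Dvd.dvd.mul_left (sgf_dvd r (Finset.mem_range.mp hi)) _
        · exact Dvd.dvd.mul_left ⟨r (k+1) / g2, sgf_eR r k⟩ t
      have hTw : (∑ i ∈ Icc 1 k, ((range i).gcd r / (range (i+1)).gcd r - 1) * r i) ≤ w := by
        have h1 := sgf_T h r hpos hdec hstrict k (by omega)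
        have h2 : r (k+1) ≤ e * r (k+1) := Nat.le_mul_of_pos_left _ (by omega)
        have h3 : e * r (k+1) ≤ t * (e * r (k+1)) := Nat.le_mul_of_pos_left _ htpos
        omega
      obtain ⟨b', hb'b, hb's⟩ := sgf_P h r h0 hdec k (by omega) w hgw hTw
      refine ⟨fun i => if i = k + 1 then b1 else b' i, ?_, ?_⟩
      · intro i h1 h2
        by_cases hik : i = k + 1
        · subst hik; simpa using hb1e
        · simpa [hik] using hb'b i h1 (by omega)
      · rw [Finset.sum_range_succ (fun i => (if i = k + 1 then b1 else b' i) * r i) (k+1),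
            Finset.sum_range_succ (fun i => a i * r i) (k+1)]
        have hcong : ∑ i ∈ range (k+1), (if i = k + 1 then b1 else b' i) * r i
            = ∑ i ∈ range (k+1), b' i * r i := by
          refine Finset.sum_congr rfl fun i hi => ?_
          rw [if_neg (by have := Finset.mem_range.mp hi; omega)]
        simp only [hcong, eq_self_iff_true, if_true, ← hb's]
        have haR : a (k+1) * r (k+1) = t * (e * r (k+1)) + b1 * r (k+1) := by
          rw [hsplit]; ring
        omega

/-- Uniqueness of bounded representations. -/
lemma sgf_U (h : ℕ) (r : ℕ → ℕ) (hpos : ∀ j, j ≤ h → 0 < r j)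
    (hdec : ∀ j, 1 ≤ j → j ≤ h → (range (j+1)).gcd r < (range j).gcd r) :
    ∀ k, k ≤ h → ∀ a b : ℕ → ℕ,
      (∀ i, 1 ≤ i → i ≤ k → a i < (range i).gcd r / (range (i+1)).gcd r) →
      (∀ i, 1 ≤ i → i ≤ k → b i < (range i).gcd r / (range (i+1)).gcd r) →
      (∑ i ∈ range (k+1), a i * r i) = (∑ i ∈ range (k+1), b i * r i) →
      ∀ i, i ≤ k → a i = b i := by
  intro k
  induction k with
  | zero =>
    intro _ a b _ _ hs i hi
    interval_cases i
    rw [Finset.range_one, Finset.sum_singleton] at hs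
    exact Nat.eq_of_mul_eq_mul_right (hpos 0 (by omega)) hs
  | succ k ih =>
    intro hk a b ha hb hs i hi
    have h0 : 0 < r 0 := hpos 0 (by omega)
    set g1 := (range (k+1)).gcd r with hg1def
    set g2 := (range (k+2)).gcd r with hg2def
    set e := g1 / g2 with hedef
    have hg2R : g2 ∣ r (k+1) := by rw [hg2def, sgf_gcd_succ]; exact Nat.gcd_dvd_left _ _
    have hg2g1 : g2 ∣ g1 := sgf_dvd_succ r (k+1)
    have hg2pos : 0 < g2 := sgf_gpos r h0 (by omega)
    have he2 : 2 ≤ e := sgf_e2 r h0 (by omega) (hdec (k+1) (by omega) (by omega))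
    have hdA : g1 ∣ ∑ i ∈ range (k+1), a i * r i :=
      Finset.dvd_sum fun i hi => Dvd.dvd.mul_left (sgf_dvd r (Finset.mem_range.mp hi)) _
    have hdB : g1 ∣ ∑ i ∈ range (k+1), b i * r i :=
      Finset.dvd_sum fun i hi => Dvd.dvd.mul_left (sgf_dvd r (Finset.mem_range.mp hi)) _
    obtain ⟨A, hA⟩ := hdA
    obtain ⟨B, hB⟩ := hdB
    rw [Finset.sum_range_succ (fun i => a i * r i) (k+1),
        Finset.sum_range_succ (fun i => b i * r i) (k+1), hA, hB] at hs
    -- hs : g1 * A + a (k+1) * r (k+1) = g1 * B + b (k+1) * r (k+1)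
    have hz : ((a (k+1) : ℤ) - b (k+1)) * r (k+1) = (g1 : ℤ) * ((B : ℤ) - A) := by
      have := congrArg (Nat.cast : ℕ → ℤ) hs
      push_cast at this
      linarith
    have hR' : (r (k+1) : ℤ) = (g2 : ℤ) * ((r (k+1) / g2 : ℕ) : ℤ) := by
      have : g2 * (r (k+1) / g2) = r (k+1) := Nat.mul_div_cancel' hg2R
      exact_mod_cast (congrArg (Nat.cast : ℕ → ℤ) this).symm
    have hg1e : (g1 : ℤ) = (g2 : ℤ) * e := by
      have : g2 * e = g1 := Nat.mul_div_cancel' hg2g1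
      exact_mod_cast (congrArg (Nat.cast : ℕ → ℤ) this).symm
    have hdvd2 : (g2 : ℤ) * e ∣ (g2 : ℤ) * (((a (k+1) : ℤ) - b (k+1)) * ((r (k+1) / g2 : ℕ) : ℤ)) := by
      rw [← hg1e]
      exact ⟨(B : ℤ) - A, by linear_combination hz - ((a (k+1) : ℤ) - b (k+1)) * hR'⟩
    have hdvd3 : (e : ℤ) ∣ ((a (k+1) : ℤ) - b (k+1)) * ((r (k+1) / g2 : ℕ) : ℤ) :=
      (mul_dvd_mul_iff_left (by exact_mod_cast (by omega : g2 ≠ 0) : (g2:ℤ) ≠ 0)).mp hdvd2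
    have hcop : Nat.Coprime e (r (k+1) / g2) := by
      have hgcd : g2 = Nat.gcd (r (k+1)) g1 := by rw [hg2def, sgf_gcd_succ]
      have := Nat.coprime_div_gcd_div_gcd (m := r (k+1)) (n := g1) (by rw [← hgcd]; exact hg2pos)
      rw [← hgcd] at this
      exact this.symm
    have hcopZ : IsCoprime (e : ℤ) (((r (k+1) / g2 : ℕ) : ℕ) : ℤ) :=
      Nat.isCoprime_iff_coprime.mpr hcop
    have hdvd4 : (e : ℤ) ∣ (a (k+1) : ℤ) - b (k+1) := hcopZ.dvd_of_dvd_mul_right hdvd3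
    have htop : a (k+1) = b (k+1) := by
      obtain ⟨u, hu⟩ := hdvd4
      have ha1 : a (k+1) < e := ha (k+1) (by omega) (by omega)
      have hb1 : b (k+1) < e := hb (k+1) (by omega) (by omega)
      have hu0 : u = 0 := by
        by_contra huc
        rcases lt_or_ge u 0 with hneg | hpos2
        · have : (e : ℤ) * u ≤ (e : ℤ) * (-1) := by
            apply mul_le_mul_of_nonneg_left (by omega) (by positivity)
          omega
        · have h1 : (1 : ℤ) ≤ u := by omega
          have : (e : ℤ) * 1 ≤ (e : ℤ) * u := by
            apply mul_le_mul_of_nonneg_left h1 (by positivity)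
          omega
      rw [hu0, Int.mul_zero] at hu
      omega
    -- now cancel top terms
    have hsum : ∑ i ∈ range (k+1), a i * r i = ∑ i ∈ range (k+1), b i * r i := by
      have h5 : a (k+1) * r (k+1) = b (k+1) * r (k+1) := by rw [htop]
      rw [hA, hB]
      omega
    rcases Nat.lt_or_ge i (k+1) with hik | hik
    · exact ih (by omega) a b (fun i h1 h2 => ha i h1 (by omega))
        (fun i h1 h2 => hb i h1 (by omega)) hsum i (by omega)
    · have : i = k + 1 := by omega
      rw [this]; exact htop


/-- A numerical semigroup strictly generated by `r₀, …, r_h` (with strictly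
decreasing divisor sequence `d j = gcd(r₀,…,r_{j-1})` ending at `d (h+1) = 1`)
is free: every element `z` of the semigroup admits a unique representation
`z = Σ_{j=0}^{h} a_j r_j` with `a₀ ∈ ℕ` and `a_j < d_j/d_{j+1}` for
`1 ≤ j ≤ h`. -/
theorem strictly_generated_semigroup_free (h : ℕ) (r d : ℕ → ℕ)
    (hpos : ∀ j, j ≤ h → 0 < r j)
    (hd : ∀ j, 1 ≤ j → j ≤ h + 1 → d j = (Finset.range j).gcd r)
    (hdec : ∀ j, 1 ≤ j → j ≤ h → d (j + 1) < d j)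
    (hone : d (h + 1) = 1)
    (hstrict : ∀ j, 1 ≤ j → j + 1 ≤ h → (d j / d (j + 1)) * r j < r (j + 1)) :
    ∀ z : ℕ, (∃ a : Fin (h + 1) → ℕ, z = ∑ j, a j * r (j : ℕ)) →
      ∃! a : Fin (h + 1) → ℕ,
        (∀ j : Fin (h + 1), 1 ≤ (j : ℕ) → a j < d (j : ℕ) / d ((j : ℕ) + 1)) ∧
        z = ∑ j, a j * r (j : ℕ) := by
  intro z hz
  obtain ⟨a, haz⟩ := hz
  have h0 : 0 < r 0 := hpos 0 (by omega)
  have hdec' : ∀ j, 1 ≤ j → j ≤ h → (range (j+1)).gcd r < (range j).gcd r := by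
    intro j h1 h2
    have := hdec j h1 h2
    rwa [hd j h1 (by omega), hd (j+1) (by omega) (by omega)] at this
  have hstrict' : ∀ j, 1 ≤ j → j + 1 ≤ h →
      ((range j).gcd r / (range (j+1)).gcd r) * r j < r (j+1) := by
    intro j h1 h2
    have := hstrict j h1 h2
    rwa [hd j h1 (by omega), hd (j+1) (by omega) (by omega)] at this
  set a' : ℕ → ℕ := fun i => if hi : i < h + 1 then a ⟨i, hi⟩ else 0 with ha'def
  have hsum_a : ∑ j : Fin (h+1), a j * r (j:ℕ) = ∑ i ∈ range (h+1), a' i * r i := by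
    rw [← Fin.sum_univ_eq_sum_range (fun i => a' i * r i) (h+1)]
    exact Finset.sum_congr rfl fun j _ => by simp [ha'def]; intro hj; exact absurd j.isLt (by omega)
  obtain ⟨b, hbb, hbs⟩ := sgf_EX h r hpos hdec' hstrict' h (le_refl h) a'
  refine ⟨fun j => b (j : ℕ), ⟨?_, ?_⟩, ?_⟩
  · intro j h1
    have hj : (j : ℕ) ≤ h := by omega
    rw [hd _ h1 (by omega), hd _ (by omega) (by omega)]
    exact hbb _ h1 hj
  · have hsum_b : ∑ j : Fin (h+1), b (j:ℕ) * r (j:ℕ) = ∑ i ∈ range (h+1), b i * r i :=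
      Fin.sum_univ_eq_sum_range (fun i => b i * r i) (h+1)
    rw [hsum_b, hbs, ← hsum_a]
    exact haz
  · rintro y ⟨hyb, hys⟩
    set y' : ℕ → ℕ := fun i => if hi : i < h + 1 then y ⟨i, hi⟩ else 0 with hy'def
    have hsum_y : ∑ j : Fin (h+1), y j * r (j:ℕ) = ∑ i ∈ range (h+1), y' i * r i := by
      rw [← Fin.sum_univ_eq_sum_range (fun i => y' i * r i) (h+1)]
      exact Finset.sum_congr rfl fun j _ => by simp [hy'def]; intro hj; exact absurd j.isLt (by omega)
    have hyb' : ∀ i, 1 ≤ i → i ≤ h → y' i < (range i).gcd r / (range (i+1)).gcd r := by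
      intro i h1 h2
      have hi : i < h + 1 := by omega
      have hy := hyb ⟨i, hi⟩ (by simpa using h1)
      rw [hd i h1 (by omega), hd (i+1) (by omega) (by omega)] at hy
      show (if h' : i < h + 1 then y ⟨i, h'⟩ else 0) < (range i).gcd r / (range (i+1)).gcd r
      rw [dif_pos hi]
      exact hy
    have heq : ∑ i ∈ range (h+1), y' i * r i = ∑ i ∈ range (h+1), b i * r i := by
      rw [← hsum_y, ← hys, haz, hsum_a, ← hbs]
    have hU := sgf_U h r hpos hdec' h le_rfl y' b hyb' hbb heq
    funext j
    have hUj := hU (j : ℕ) (by omega)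
    have hyy : y' (j : ℕ) = y j := by
      show (if h' : (j:ℕ) < h + 1 then y ⟨(j:ℕ), h'⟩ else 0) = y j
      rw [dif_pos j.isLt]
    rw [← hyy, hUj]
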